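/- Variance bound for a Hermite polynomial of a shifted Gaussian (corrected form of the paper's lemma): For every integer d ≥ 1, every θ ∈ ℝ, and X distributed as the one-dimensional Gaussian N(θ, 1), the variance Var[He_d(X)] = Σ_{k=1}^{d} C(d, k)² · θ^{2(d−k)} · k! satisfies Var[He_d(X)] ≤ 3 d² · max(d, |θ|)^{2(d−1)}. -/

import Mathlib

open MeasureTheory Polynomial Real Filter Set
open scoped ENNReal NNReal

noncomputable def gw (x : ℝ) : ℝ := Real.exp (-(1/2) * x^2)

lemma gw_pos (x : ℝ) : 0 < gw x := Real.exp_pos _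

lemma tendsto_pow_gw_atTop (k : ℕ) :
    Tendsto (fun x : ℝ => x ^ k * gw x) atTop (nhds 0) := by
  have h := rpow_mul_exp_neg_mul_sq_isLittleO_exp_neg (by norm_num : (0:ℝ) < 1/2) k
  simp only [Real.rpow_natCast] at h
  have h2 : Tendsto (fun x : ℝ => Real.exp (-(1/2) * x)) atTop (nhds 0) := by
    apply Real.tendsto_exp_atBot.comp
    exact Tendsto.const_mul_atTop_of_neg (by norm_num : (-(1/2:ℝ)) < 0) tendsto_id
  exact h.trans_tendsto h2

lemma tendsto_pow_gw_atBot (k : ℕ) :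
    Tendsto (fun x : ℝ => x ^ k * gw x) atBot (nhds 0) := by
  rw [tendsto_zero_iff_abs_tendsto_zero]
  have hfun : (abs ∘ fun x : ℝ => x ^ k * gw x) = (fun y : ℝ => y ^ k * gw y) ∘ abs := by
    funext x
    simp only [Function.comp_apply, abs_mul, abs_pow, gw]
    rw [abs_of_pos (Real.exp_pos _), sq_abs]
  rw [hfun]
  exact (tendsto_pow_gw_atTop k).comp tendsto_abs_atBot_atTop

lemma integrable_pow_gw (k : ℕ) : Integrable fun x : ℝ => x ^ k * gw x := by
  have h := integrable_rpow_mul_exp_neg_mul_sq (by norm_num : (0:ℝ) < 1/2)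
    (s := (k:ℝ)) (lt_of_lt_of_le neg_one_lt_zero (Nat.cast_nonneg k))
  simpa [gw, Real.rpow_natCast] using h

lemma integrable_gw : Integrable gw := by
  simpa using integrable_pow_gw 0

lemma hasDerivAt_gw (x : ℝ) : HasDerivAt gw (-x * gw x) x := by
  have hu : HasDerivAt (fun x : ℝ => -(1/2) * x^2) (-x) x := by
    have := (hasDerivAt_pow 2 x).const_mul (-(1/2) : ℝ)
    refine this.congr_deriv ?_
    ring
  have := hu.exp
  refine this.congr_deriv ?_
  rw [mul_comm]
  rfl

lemma integral_eq_zero_of_deriv (F f : ℝ → ℝ) (hd : ∀ x, HasDerivAt F (f x) x)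
    (hi : Integrable f) (ht : Tendsto F atTop (nhds 0)) (hb : Tendsto F atBot (nhds 0)) :
    ∫ x, f x = 0 := by
  have h1 := integral_Ioi_of_hasDerivAt_of_tendsto (a := 0)
    (hd 0).continuousAt.continuousWithinAt (fun x _ => hd x) hi.integrableOn ht
  have h2 := integral_Iic_of_hasDerivAt_of_tendsto (a := 0)
    (hd 0).continuousAt.continuousWithinAt (fun x _ => hd x) hi.integrableOn hb
  rw [← intervalIntegral.integral_Iic_add_Ioi hi.integrableOn hi.integrableOn, h1, h2]
  ring

lemma integral_pow_one_gw : ∫ x : ℝ, x ^ 1 * gw x = 0 := by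
  apply integral_eq_zero_of_deriv (fun x => -gw x)
  · intro x
    have := (hasDerivAt_gw x).neg
    refine this.congr_deriv ?_
    ring
  · exact integrable_pow_gw 1
  · simpa using (tendsto_pow_gw_atTop 0).neg
  · simpa using (tendsto_pow_gw_atBot 0).neg

lemma integral_pow_gw_rec (n : ℕ) :
    ∫ x : ℝ, x ^ (n+2) * gw x = (n+1 : ℝ) * ∫ x : ℝ, x ^ n * gw x := by
  have key : ∫ x : ℝ, ((n+1 : ℝ) * x ^ n - x ^ (n+2)) * gw x = 0 := by
    apply integral_eq_zero_of_deriv (fun x => x ^ (n+1) * gw x)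
    · intro x
      have := (hasDerivAt_pow (n+1) x).mul (hasDerivAt_gw x)
      refine this.congr_deriv ?_
      push_cast
      ring
    · have h := ((integrable_pow_gw n).const_mul (n+1 : ℝ)).sub (integrable_pow_gw (n+2))
      apply h.congr
      filter_upwards with x
      simp only [Pi.sub_apply]
      ring
    · exact tendsto_pow_gw_atTop (n+1)
    · exact tendsto_pow_gw_atBot (n+1)
  have hsplit : ∫ x : ℝ, ((n+1 : ℝ) * x ^ n - x ^ (n+2)) * gw x
      = (n+1 : ℝ) * (∫ x : ℝ, x ^ n * gw x) - ∫ x : ℝ, x ^ (n+2) * gw x := by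
    rw [← integral_const_mul, ← integral_sub ((integrable_pow_gw n).const_mul _) (integrable_pow_gw (n+2))]
    congr 1
    funext x
    ring
  rw [hsplit] at key
  linarith

lemma integral_gw : ∫ x : ℝ, gw x = Real.sqrt (2 * π) := by
  have h := integral_gaussian (1/2 : ℝ)
  have : π / (1/2 : ℝ) = 2 * π := by ring
  rw [this] at h
  simpa [gw] using h

lemma gw_def (x : ℝ) : gw x = Real.exp (-(1/2) * x^2) := rfl

noncomputable def J (p : ℝ[X]) : ℝ := (Real.sqrt (2 * π))⁻¹ * ∫ x, eval x p * gw x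

lemma integrable_eval_gw (p : ℝ[X]) : Integrable fun x : ℝ => eval x p * gw x := by
  have hfun : (fun x : ℝ => eval x p * gw x)
      = fun x => ∑ i ∈ Finset.range (p.natDegree + 1), p.coeff i * (x ^ i * gw x) := by
    funext x
    rw [eval_eq_sum_range, Finset.sum_mul]
    simp [mul_assoc]
  rw [hfun]
  exact integrable_finset_sum _ (fun i _ => (integrable_pow_gw i).const_mul _)

lemma J_add (p q : ℝ[X]) : J (p + q) = J p + J q := by
  simp only [J, ← mul_add, ← integral_add (integrable_eval_gw p) (integrable_eval_gw q)]
  congr 1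
  congr 1
  funext x
  simp [add_mul]

lemma J_zero : J 0 = 0 := by simp [J]

lemma J_sub (p q : ℝ[X]) : J (p - q) = J p - J q := by
  have := J_add (p - q) q
  simp only [sub_add_cancel] at this
  linarith

lemma J_C_mul (a : ℝ) (p : ℝ[X]) : J (C a * p) = a * J p := by
  simp only [J, eval_mul, eval_C]
  have h : ∫ x, a * eval x p * gw x = a * ∫ x, eval x p * gw x := by
    rw [← integral_const_mul]
    congr 1
    funext x
    ring
  rw [h]
  ring

lemma J_smul (a : ℝ) (p : ℝ[X]) : J (a • p) = a * J p := by
  rw [smul_eq_C_mul, J_C_mul]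

lemma J_one : J 1 = 1 := by
  simp only [J, eval_one, one_mul, integral_gw]
  rw [inv_mul_cancel₀]
  positivity

lemma J_C (a : ℝ) : J (C a) = a := by
  rw [show (C a : ℝ[X]) = C a * 1 by ring, J_C_mul, J_one, mul_one]

lemma J_sum {ι : Type*} (s : Finset ι) (f : ι → ℝ[X]) : J (∑ i ∈ s, f i) = ∑ i ∈ s, J (f i) := by
  classical
  induction s using Finset.induction_on with
  | empty => simp [J_zero]
  | @insert a s' ha ih => rw [Finset.sum_insert ha, J_add, ih, Finset.sum_insert ha]

lemma J_monomial (n : ℕ) (a : ℝ) : J (monomial n a) = (Real.sqrt (2*π))⁻¹ * (a * ∫ x : ℝ, x ^ n * gw x) := by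
  simp only [J, eval_monomial, ← integral_const_mul, mul_assoc]

lemma J_X_mul (q : ℝ[X]) : J (X * q) = J (derivative q) := by
  induction q using Polynomial.induction_on' with
  | add p q hp hq => rw [mul_add, J_add, hp, hq, derivative_add, J_add]
  | monomial n a =>
    rw [X_mul_monomial, derivative_monomial, J_monomial, J_monomial]
    match n with
    | 0 =>
      have h1 : ∫ x : ℝ, x * gw x = 0 := by simpa using integral_pow_one_gw
      simp only [zero_add, pow_one, h1, Nat.cast_zero, mul_zero, zero_mul, CharP.cast_eq_zero]
    | (k+1) =>
      have h2 : (∫ x : ℝ, x ^ (k+1+1) * gw x) = ((k:ℝ)+1) * ∫ x : ℝ, x ^ k * gw x :=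
        integral_pow_gw_rec k
      rw [h2]
      simp only [Nat.add_sub_cancel]
      push_cast
      ring

noncomputable def Hp (n : ℕ) : ℝ[X] := (hermite n).map (Int.castRingHom ℝ)

lemma Hp_zero : Hp 0 = 1 := by simp [Hp]

lemma Hp_succ (n : ℕ) : Hp (n+1) = X * Hp n - derivative (Hp n) := by
  simp only [Hp, hermite_succ, Polynomial.map_sub, Polynomial.map_mul, Polynomial.map_X,
    derivative_map]

lemma Hp_natDegree_le (n : ℕ) : (Hp n).natDegree ≤ n := by
  refine le_trans natDegree_map_le ?_
  simp

lemma Hp_coeff (n k : ℕ) : (Hp n).coeff k = ((hermite n).coeff k : ℝ) := by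
  simp [Hp]

lemma J_Hp_mul (n : ℕ) : ∀ q : ℝ[X], J (Hp n * q) = J (derivative^[n] q) := by
  induction n with
  | zero => intro q; simp [Hp_zero]
  | succ n ih =>
    intro q
    have key : J (X * (Hp n * q)) = J (derivative (Hp n) * q) + J (Hp n * derivative q) := by
      rw [J_X_mul, derivative_mul, J_add]
    have : J (Hp (n+1) * q) = J (Hp n * derivative q) := by
      rw [Hp_succ, sub_mul, J_sub, mul_assoc, key]
      ring
    rw [this, ih (derivative q), ← Function.iterate_succ_apply]

lemma iterate_derivative_eq_C (k : ℕ) : ∀ p : ℝ[X], p.natDegree ≤ k →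
    derivative^[k] p = C ((k.factorial : ℝ) * p.coeff k) := by
  induction k with
  | zero =>
    intro p hp
    rw [Function.iterate_zero_apply, Polynomial.eq_C_of_natDegree_le_zero hp]
    simp
  | succ k ih =>
    intro p hp
    rw [Function.iterate_succ_apply, ih (derivative p)
      (le_trans (natDegree_derivative_le p) (by omega)), coeff_derivative]
    congr 1
    push_cast [Nat.factorial_succ]
    ring

lemma J_Hp (n : ℕ) : J (Hp n) = if n = 0 then 1 else 0 := by
  have h := J_Hp_mul n 1
  rw [mul_one] at h
  rw [h]
  match n with
  | 0 => simp [J_one]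
  | (m+1) =>
    rw [Function.iterate_succ_apply]
    simp [J_zero, iterate_derivative_zero]

lemma J_Hp_mul_Hp_of_le {j k : ℕ} (h : j ≤ k) :
    J (Hp k * Hp j) = if j = k then (k.factorial : ℝ) else 0 := by
  rw [J_Hp_mul k (Hp j), iterate_derivative_eq_C k (Hp j) (le_trans (Hp_natDegree_le j) h), J_C,
    Hp_coeff]
  rcases eq_or_lt_of_le h with rfl | hlt
  · simp
  · rw [coeff_hermite_of_lt hlt]
    simp [Nat.ne_of_lt hlt]

lemma J_Hp_mul_Hp (j k : ℕ) :
    J (Hp j * Hp k) = if j = k then (k.factorial : ℝ) else 0 := by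
  rcases le_total k j with h | h
  · rw [J_Hp_mul_Hp_of_le h]
    rcases eq_or_ne j k with rfl | hne
    · simp
    · simp [hne, Ne.symm hne]
  · rw [mul_comm, J_Hp_mul_Hp_of_le h]

lemma Hp_comp (θ : ℝ) (n : ℕ) : (Hp n).comp (X + C θ)
    = ∑ k ∈ Finset.range (n+1), C ((n.choose k : ℝ) * θ^(n-k)) * Hp k := by
  induction n with
  | zero => simp [Hp_zero]
  | succ n ih =>
    have hderiv : (derivative (Hp n)).comp (X + C θ) = derivative ((Hp n).comp (X + C θ)) := by
      rw [derivative_comp]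
      simp
    have hstep : (Hp (n+1)).comp (X + C θ)
        = (X * ((Hp n).comp (X + C θ)) - derivative ((Hp n).comp (X + C θ)))
          + C θ * ((Hp n).comp (X + C θ)) := by
      rw [Hp_succ, sub_comp, mul_comp, X_comp, ← hderiv]
      ring
    rw [hstep, ih]
    have hA : X * (∑ k ∈ Finset.range (n+1), C ((n.choose k : ℝ) * θ^(n-k)) * Hp k)
        - derivative (∑ k ∈ Finset.range (n+1), C ((n.choose k : ℝ) * θ^(n-k)) * Hp k)
        = ∑ k ∈ Finset.range (n+1), C ((n.choose k : ℝ) * θ^(n-k)) * Hp (k+1) := by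
      rw [derivative_sum, Finset.mul_sum, ← Finset.sum_sub_distrib]
      refine Finset.sum_congr rfl fun k _ => ?_
      rw [Hp_succ, derivative_mul, derivative_C]
      ring
    rw [hA]
    have hB : C θ * (∑ k ∈ Finset.range (n+1), C ((n.choose k : ℝ) * θ^(n-k)) * Hp k)
        = ∑ k ∈ Finset.range (n+1), C ((n.choose k : ℝ) * θ^(n+1-k)) * Hp k := by
      rw [Finset.mul_sum]
      refine Finset.sum_congr rfl fun k hk => ?_
      rw [Finset.mem_range] at hk
      rw [← mul_assoc, ← C_mul]
      congr 2
      have : n + 1 - k = (n - k) + 1 := by omega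
      rw [this, pow_succ]
      ring
    rw [hB]
    -- now RHS reindex
    rw [Finset.sum_range_succ' (fun k => C (((n+1).choose k : ℝ) * θ^(n+1-k)) * Hp k) (n+1)]
    rw [Finset.sum_range_succ' (fun k => C ((n.choose k : ℝ) * θ^(n+1-k)) * Hp k) n]
    have hpascal : ∀ i ∈ Finset.range (n+1),
        C (((n+1).choose (i+1) : ℝ) * θ^(n+1-(i+1))) * Hp (i+1)
        = C ((n.choose i : ℝ) * θ^(n-i)) * Hp (i+1)
          + C ((n.choose (i+1) : ℝ) * θ^(n-i)) * Hp (i+1) := by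
      intro i _
      rw [Nat.choose_succ_succ]
      have : n + 1 - (i+1) = n - i := by omega
      rw [this]
      push_cast
      rw [← add_mul, ← C_add, ← add_mul]
    rw [Finset.sum_congr rfl hpascal, Finset.sum_add_distrib]
    have htop : ∑ i ∈ Finset.range (n+1), C ((n.choose (i+1) : ℝ) * θ^(n-i)) * Hp (i+1)
        = ∑ i ∈ Finset.range n, C ((n.choose (i+1) : ℝ) * θ^(n+1-(i+1))) * Hp (i+1) := by
      rw [Finset.sum_range_succ]
      simp only [Nat.choose_succ_self, Nat.cast_zero, zero_mul, map_zero, zero_mul, add_zero]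
      refine Finset.sum_congr rfl fun i hi => ?_
      rw [show n + 1 - (i+1) = n - i by omega]
    rw [htop]
    simp only [Nat.choose_zero_right, Nat.cast_one, Nat.sub_zero]
    ring

lemma Hp_def (n : ℕ) : Hp n = (hermite n).map (Int.castRingHom ℝ) := rfl

lemma J_def (p : ℝ[X]) : J p = (Real.sqrt (2 * π))⁻¹ * ∫ x, eval x p * gw x := rfl

lemma J_R (θ : ℝ) (d : ℕ) : J ((Hp d).comp (X + C θ)) = θ ^ d := by
  rw [Hp_comp, J_sum]
  rw [Finset.sum_eq_single 0]
  · rw [J_C_mul, J_Hp]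
    simp
  · intro k _ hk
    rw [J_C_mul, J_Hp]
    simp [hk]
  · simp

lemma J_R_sq (θ : ℝ) (d : ℕ) : J (((Hp d).comp (X + C θ))^2)
    = ∑ k ∈ Finset.range (d+1), ((d.choose k : ℝ) * θ^(d-k))^2 * (k.factorial : ℝ) := by
  rw [sq, Hp_comp, Finset.sum_mul_sum, J_sum]
  have hterm : ∀ j ∈ Finset.range (d+1),
      J (∑ k ∈ Finset.range (d+1),
        (C ((d.choose j : ℝ) * θ^(d-j)) * Hp j) * (C ((d.choose k : ℝ) * θ^(d-k)) * Hp k))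
      = ((d.choose j : ℝ) * θ^(d-j))^2 * (j.factorial : ℝ) := by
    intro j hj
    rw [J_sum]
    have h2 : ∀ k ∈ Finset.range (d+1),
        J ((C ((d.choose j : ℝ) * θ^(d-j)) * Hp j) * (C ((d.choose k : ℝ) * θ^(d-k)) * Hp k))
        = if j = k then ((d.choose j : ℝ) * θ^(d-j)) * (((d.choose k : ℝ) * θ^(d-k)) * (k.factorial : ℝ)) else 0 := by
      intro k _
      rw [show (C ((d.choose j : ℝ) * θ^(d-j)) * Hp j) * (C ((d.choose k : ℝ) * θ^(d-k)) * Hp k)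
        = C ((d.choose j : ℝ) * θ^(d-j)) * (C ((d.choose k : ℝ) * θ^(d-k)) * (Hp j * Hp k)) by ring,
        J_C_mul, J_C_mul, J_Hp_mul_Hp]
      split_ifs <;> simp
    rw [Finset.sum_congr rfl h2, Finset.sum_ite_eq (Finset.range (d+1)) j
      (fun k => ((d.choose j : ℝ) * θ^(d-j)) * (((d.choose k : ℝ) * θ^(d-k)) * (k.factorial : ℝ)))]
    simp only [hj, if_true]
    ring
  rw [Finset.sum_congr rfl hterm]

-- measure bridging
lemma gaussianPDFReal_one (θ x : ℝ) :
    ProbabilityTheory.gaussianPDFReal θ 1 x = (Real.sqrt (2 * π))⁻¹ * gw (x - θ) := by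
  unfold ProbabilityTheory.gaussianPDFReal
  rw [gw_def]
  norm_num
  left
  congr 1
  ring

lemma integral_gaussianReal_eq (θ : ℝ) (h : ℝ → ℝ) (hm : Measurable h) :
    ∫ x, h x ∂(ProbabilityTheory.gaussianReal θ 1)
      = (Real.sqrt (2 * π))⁻¹ * ∫ x, gw (x - θ) * h x := by
  rw [ProbabilityTheory.gaussianReal_of_var_ne_zero θ one_ne_zero]
  rw [ProbabilityTheory.gaussianPDF_def]
  have hrw : (fun x => ENNReal.ofReal (ProbabilityTheory.gaussianPDFReal θ 1 x))
      = fun x => ((ProbabilityTheory.gaussianPDFReal θ 1 x).toNNReal : ℝ≥0∞) := by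
    funext x; rfl
  rw [hrw, integral_withDensity_eq_integral_smul
    ((ProbabilityTheory.measurable_gaussianPDFReal θ 1).real_toNNReal) h]
  rw [← integral_const_mul]
  congr 1
  funext x
  rw [NNReal.smul_def, Real.coe_toNNReal _ (ProbabilityTheory.gaussianPDFReal_nonneg θ 1 x),
    gaussianPDFReal_one, smul_eq_mul]
  ring

lemma integral_gaussianReal_eval (θ : ℝ) (p : ℝ[X]) :
    ∫ x, eval x p ∂(ProbabilityTheory.gaussianReal θ 1) = J (p.comp (X + C θ)) := by
  rw [integral_gaussianReal_eq θ _ p.continuous.measurable, J_def]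
  congr 1
  have : (fun x : ℝ => gw (x - θ) * eval x p)
      = fun x : ℝ => (fun y => eval y (p.comp (X + C θ)) * gw y) (x - θ) := by
    funext x
    show gw (x - θ) * eval x p = eval (x - θ) (p.comp (X + C θ)) * gw (x - θ)
    rw [eval_comp]
    simp [mul_comm]
  rw [this, integral_sub_right_eq_self (fun y => eval y (p.comp (X + C θ)) * gw y) θ]

lemma integrable_eval_gaussianReal (θ : ℝ) (p : ℝ[X]) :
    Integrable (fun x => eval x p) (ProbabilityTheory.gaussianReal θ 1) := by
  rw [ProbabilityTheory.gaussianReal_of_var_ne_zero θ one_ne_zero,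
    ProbabilityTheory.gaussianPDF_def]
  have hrw : (fun x => ENNReal.ofReal (ProbabilityTheory.gaussianPDFReal θ 1 x))
      = fun x => ((ProbabilityTheory.gaussianPDFReal θ 1 x).toNNReal : ℝ≥0∞) := by
    funext x; rfl
  rw [hrw, integrable_withDensity_iff_integrable_smul
    ((ProbabilityTheory.measurable_gaussianPDFReal θ 1).real_toNNReal)]
  have heq : (fun x => (ProbabilityTheory.gaussianPDFReal θ 1 x).toNNReal • eval x p)
      = fun x => (Real.sqrt (2 * π))⁻¹ *
          ((fun y => eval y (p.comp (X + C θ)) * gw y) (x - θ)) := by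
    funext x
    rw [NNReal.smul_def, Real.coe_toNNReal _ (ProbabilityTheory.gaussianPDFReal_nonneg θ 1 x),
      gaussianPDFReal_one, smul_eq_mul]
    show (√(2 * π))⁻¹ * gw (x - θ) * eval x p
      = (√(2 * π))⁻¹ * (eval (x - θ) (p.comp (X + C θ)) * gw (x - θ))
    rw [eval_comp]
    simp only [eval_add, eval_X, eval_C, sub_add_cancel]
    ring
  rw [heq]
  exact (((integrable_eval_gw (p.comp (X + C θ)))).comp_sub_right θ).const_mul _

lemma two_pow_pred_le_factorial (k : ℕ) : 2 ^ (k - 1) ≤ k.factorial := by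
  match k with
  | 0 => simp
  | (k+1) =>
    have := @Nat.factorial_mul_pow_le_factorial 1 k
    simpa [Nat.factorial, Nat.add_comm] using this

lemma nat_term_bound (d k : ℕ) : (d.choose k)^2 * k.factorial * 2^(k-1) ≤ d^(2*k) := by
  calc (d.choose k)^2 * k.factorial * 2^(k-1)
      ≤ (d.choose k)^2 * k.factorial * k.factorial := by
        exact Nat.mul_le_mul_left _ (two_pow_pred_le_factorial k)
    _ = (k.factorial * d.choose k)^2 := by ring
    _ = (d.descFactorial k)^2 := by rw [Nat.descFactorial_eq_factorial_mul_choose]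
    _ ≤ (d^k)^2 := Nat.pow_le_pow_left (Nat.descFactorial_le_pow d k) 2
    _ = d^(2*k) := by rw [← pow_mul, mul_comm]

lemma sum_bound (d : ℕ) (hd : 1 ≤ d) (θ : ℝ) :
    (∑ k ∈ Finset.Icc 1 d, (d.choose k : ℝ) ^ 2 * θ ^ (2 * (d - k)) * (k.factorial : ℝ)) ≤
      3 * (d : ℝ) ^ 2 * (max (d : ℝ) |θ|) ^ (2 * (d - 1)) := by
  set M : ℝ := max (d : ℝ) |θ| with hM
  have hdM : (d : ℝ) ≤ M := le_max_left _ _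
  have hθM : |θ| ≤ M := le_max_right _ _
  have hd0 : (0:ℝ) ≤ d := Nat.cast_nonneg d
  have hM0 : 0 ≤ M := le_trans hd0 hdM
  have hterm : ∀ k ∈ Finset.Icc 1 d,
      (d.choose k : ℝ) ^ 2 * θ ^ (2 * (d - k)) * (k.factorial : ℝ)
        ≤ (d:ℝ)^2 * M ^ (2 * (d - 1)) * (1/2 : ℝ)^(k-1) := by
    intro k hk
    rw [Finset.mem_Icc] at hk
    obtain ⟨hk1, hkd⟩ := hk
    have h1 : θ ^ (2 * (d - k)) ≤ M ^ (2 * (d - k)) := by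
      rw [show 2 * (d - k) = (d-k) * 2 by ring, pow_mul, pow_mul]
      rw [← sq_abs (θ ^ (d-k))]
      refine pow_le_pow_left₀ (abs_nonneg _) ?_ 2
      rw [abs_pow]
      exact pow_le_pow_left₀ (abs_nonneg θ) hθM _
    have h2 : (d.choose k : ℝ)^2 * (k.factorial : ℝ) ≤ (d:ℝ)^(2*k) * (1/2 : ℝ)^(k-1) := by
      have hn := nat_term_bound d k
      have hcast : ((d.choose k : ℝ))^2 * (k.factorial : ℝ) * 2^(k-1) ≤ (d:ℝ)^(2*k) := by
        exact_mod_cast hn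
      have h2pos : (0:ℝ) < 2^(k-1) := by positivity
      calc (d.choose k : ℝ)^2 * (k.factorial : ℝ)
          = ((d.choose k : ℝ)^2 * (k.factorial : ℝ) * 2^(k-1)) * (1/2 : ℝ)^(k-1) := by
            rw [mul_assoc, mul_comm ((2:ℝ)^(k-1)), mul_assoc]
            rw [show (1/2 : ℝ)^(k-1) * 2^(k-1) = 1 by
              rw [← mul_pow]; norm_num]
            ring
        _ ≤ (d:ℝ)^(2*k) * (1/2 : ℝ)^(k-1) := by
            apply mul_le_mul_of_nonneg_right hcast (by positivity)
    have h3 : (d:ℝ)^(2*k) ≤ (d:ℝ)^2 * M^(2*(k-1)) := by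
      rw [show 2*k = 2 + 2*(k-1) by omega, pow_add]
      apply mul_le_mul_of_nonneg_left _ (by positivity)
      apply pow_le_pow_left₀ hd0 hdM
    have h4 : M^(2*(k-1)) * M^(2*(d-k)) = M^(2*(d-1)) := by
      rw [← pow_add]
      congr 1
      omega
    calc (d.choose k : ℝ) ^ 2 * θ ^ (2 * (d - k)) * (k.factorial : ℝ)
        = ((d.choose k : ℝ)^2 * (k.factorial : ℝ)) * θ ^ (2 * (d - k)) := by ring
      _ ≤ ((d.choose k : ℝ)^2 * (k.factorial : ℝ)) * M ^ (2 * (d - k)) := by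
          apply mul_le_mul_of_nonneg_left h1 (by positivity)
      _ ≤ ((d:ℝ)^(2*k) * (1/2 : ℝ)^(k-1)) * M ^ (2 * (d - k)) := by
          apply mul_le_mul_of_nonneg_right h2 (by positivity)
      _ ≤ ((d:ℝ)^2 * M^(2*(k-1)) * (1/2 : ℝ)^(k-1)) * M ^ (2 * (d - k)) := by
          have := mul_le_mul_of_nonneg_right h3 (le_of_lt (by positivity : (0:ℝ) < (1/2:ℝ)^(k-1)))
          apply mul_le_mul_of_nonneg_right this (by positivity)
      _ = (d:ℝ)^2 * M ^ (2 * (d - 1)) * (1/2 : ℝ)^(k-1) := by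
          rw [← h4]; ring
  calc (∑ k ∈ Finset.Icc 1 d, (d.choose k : ℝ) ^ 2 * θ ^ (2 * (d - k)) * (k.factorial : ℝ))
      ≤ ∑ k ∈ Finset.Icc 1 d, (d:ℝ)^2 * M ^ (2 * (d - 1)) * (1/2 : ℝ)^(k-1) :=
        Finset.sum_le_sum hterm
    _ = (d:ℝ)^2 * M ^ (2 * (d - 1)) * ∑ k ∈ Finset.Icc 1 d, (1/2 : ℝ)^(k-1) := by
        rw [Finset.mul_sum]
    _ ≤ (d:ℝ)^2 * M ^ (2 * (d - 1)) * 2 := by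
        apply mul_le_mul_of_nonneg_left _ (by positivity)
        have hgeom : ∀ n : ℕ, ∑ k ∈ Finset.Icc 1 n, (1/2 : ℝ)^(k-1) = 2 - 2 * (1/2)^n := by
          intro n
          induction n with
          | zero => simp
          | succ n ihn =>
            rw [Finset.sum_Icc_succ_top (by omega : 1 ≤ n+1), ihn]
            simp only [Nat.add_sub_cancel]
            ring
        rw [hgeom d]
        have : (0:ℝ) ≤ (1/2)^d := by positivity
        linarith
    _ ≤ 3 * (d : ℝ) ^ 2 * M ^ (2 * (d - 1)) := by
        have h0 : (0:ℝ) ≤ (d:ℝ)^2 * M ^ (2 * (d - 1)) := by positivity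
        linarith

lemma aeval_hermite_eq (d : ℕ) (x : ℝ) :
    (Polynomial.aeval x (Polynomial.hermite d) : ℝ) = eval x (Hp d) := by
  rw [Hp_def, aeval_def, eval₂_eq_eval_map]
  rfl

/-- Variance bound for a Hermite polynomial of a shifted Gaussian: for `X ~ N(θ,1)` and `d ≥ 1`,
`Var[He_d(X)] = ∑_{k=1}^{d} C(d,k)² θ^{2(d-k)} k! ≤ 3 d² max(d,|θ|)^{2(d-1)}`. -/
theorem stmt_7 (d : ℕ) (hd : 1 ≤ d) (θ : ℝ) :
    ProbabilityTheory.variance (fun x => (Polynomial.aeval x (Polynomial.hermite d) : ℝ))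
        (ProbabilityTheory.gaussianReal θ 1) =
      (∑ k ∈ Finset.Icc 1 d, (d.choose k : ℝ) ^ 2 * θ ^ (2 * (d - k)) * (k.factorial : ℝ)) ∧
    (∑ k ∈ Finset.Icc 1 d, (d.choose k : ℝ) ^ 2 * θ ^ (2 * (d - k)) * (k.factorial : ℝ)) ≤
      3 * (d : ℝ) ^ 2 * (max (d : ℝ) |θ|) ^ (2 * (d - 1)) := by
  refine ⟨?_, sum_bound d hd θ⟩
  have hfun : (fun x : ℝ => (Polynomial.aeval x (Polynomial.hermite d) : ℝ))
      = fun x => eval x (Hp d) := funext (aeval_hermite_eq d)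
  rw [hfun]
  have hsq : Integrable (fun x => (eval x (Hp d))^2) (ProbabilityTheory.gaussianReal θ 1) := by
    have := integrable_eval_gaussianReal θ ((Hp d)^2)
    apply this.congr
    filter_upwards with x
    rw [eval_pow]
  have hmem : MemLp (fun x => eval x (Hp d)) 2 (ProbabilityTheory.gaussianReal θ 1) := by
    rw [memLp_two_iff_integrable_sq ((Hp d).continuous.measurable.aestronglyMeasurable)]
    exact hsq
  rw [ProbabilityTheory.variance_eq_sub hmem]
  have h1 : ∫ x, ((fun x => eval x (Hp d))^2) x ∂(ProbabilityTheory.gaussianReal θ 1)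
      = ∑ k ∈ Finset.range (d+1), ((d.choose k : ℝ) * θ^(d-k))^2 * (k.factorial : ℝ) := by
    rw [show (fun x : ℝ => ((fun x => eval x (Hp d))^2) x) = fun x => eval x ((Hp d)^2) by
      funext x; simp [eval_pow]]
    rw [integral_gaussianReal_eval θ ((Hp d)^2), pow_comp, J_R_sq]
  have h2 : ∫ x, eval x (Hp d) ∂(ProbabilityTheory.gaussianReal θ 1) = θ ^ d :=
    (integral_gaussianReal_eval θ (Hp d)).trans (J_R θ d)
  rw [h1, h2]
  -- sum over range (d+1) minus θ^(2d)
  have hsplit : ∑ k ∈ Finset.range (d+1), ((d.choose k : ℝ) * θ^(d-k))^2 * (k.factorial : ℝ)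
      = (∑ k ∈ Finset.Icc 1 d, (d.choose k : ℝ) ^ 2 * θ ^ (2 * (d - k)) * (k.factorial : ℝ))
        + (θ^d)^2 := by
    have hss : Finset.range (d+1) = insert 0 (Finset.Icc 1 d) := by
      ext k
      simp [Finset.mem_range, Finset.mem_Icc, Finset.mem_insert]
      omega
    rw [hss, Finset.sum_insert (by simp)]
    have hterm : ∀ k ∈ Finset.Icc 1 d,
        ((d.choose k : ℝ) * θ^(d-k))^2 * (k.factorial : ℝ)
          = (d.choose k : ℝ) ^ 2 * θ ^ (2 * (d - k)) * (k.factorial : ℝ) := by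
      intro k _
      rw [mul_pow, show 2 * (d-k) = (d-k)*2 by ring, pow_mul]
    rw [Finset.sum_congr rfl hterm]
    simp [mul_pow, ← pow_mul, mul_comm]
    ring
  rw [hsplit]
  ring
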